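/- Let N be a Stein fillable closed manifold of dimension 2n−1 ≥ 5, i.e., N is diffeomorphic to the boundary of a compact Stein manifold of complex dimension n (which has the homotopy type of a CW-complex of dimension at most n). If i₁,...,i_k ∈ {1,...,n−2} satisfy i₁+⋯+i_k ≥ n+1, then the cup product map H^{i₁}(N;R) ⊗ ⋯ ⊗ H^{i_k}(N;R) → H^{i₁+⋯+i_k}(N;R) vanishes identically for any commutative ring R. -/
import Mathlib


/-- Let `N` be a Stein fillable closed manifold of dimension `2n-1 ≥ 5`: `N` is diffeomorphic to
the boundary of a compact Stein manifold `W` of complex dimension `n`, which (by Milnor's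
theorem) has the homotopy type of a CW-complex of dimension at most `n`.  We encode the
situation as in the general boundary theorem, with `m = 2n` and homotopical dimension `h = n`:
graded cohomology `R`-algebras of `W` and `N`, the degree-preserving restriction map `b`,
relative cohomology `Hrel j = H^j(W,N;R)` with exactness of `H^j(W) → H^j(N) → H^{j+1}(W,N)`,
Poincaré–Lefschetz duality `H^{j+1}(W,N;R) ≃ H_{2n-j-1}(W;R)`, and vanishing of the homology
and cohomology of `W` above degree `n`.
Conclusion: if `i₁,…,i_k ∈ {1,…,n-2}` satisfy `i₁+⋯+i_k ≥ n+1`, then the cup product map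
`H^{i₁}(N;R) ⊗ ⋯ ⊗ H^{i_k}(N;R) → H^{i₁+⋯+i_k}(N;R)` vanishes identically. -/
theorem statement2
    (R : Type) [CommRing R] (n : ℕ) (hn : 3 ≤ n)
    (HW HN : Type) [Ring HW] [Ring HN] [Algebra R HW] [Algebra R HN]
    (𝒲 : ℕ → Submodule R HW) (𝒩 : ℕ → Submodule R HN)
    [GradedAlgebra 𝒲] [GradedAlgebra 𝒩]
    (b : HW →ₐ[R] HN)
    (hb : ∀ j, ∀ x ∈ 𝒲 j, b x ∈ 𝒩 j)
    (Hrel : ℕ → Type) [∀ j, AddCommGroup (Hrel j)] [∀ j, Module R (Hrel j)]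
    (Hlow : ℕ → Type) [∀ j, AddCommGroup (Hlow j)] [∀ j, Module R (Hlow j)]
    (δ : ∀ j, (𝒩 j) →ₗ[R] Hrel (j + 1))
    (hexact : ∀ j (y : 𝒩 j), δ j y = 0 → ∃ x ∈ 𝒲 j, b x = (y : HN))
    (duality : ∀ j, Hrel (j + 1) ≃ₗ[R] Hlow (2 * n - j - 1))
    -- W is a Stein manifold of complex dimension n: homotopically of dimension ≤ n
    (hHlow : ∀ j, n + 1 ≤ j → Subsingleton (Hlow j))
    (hcohW : ∀ j, n + 1 ≤ j → 𝒲 j = ⊥)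
    (k : ℕ) (i : Fin k → ℕ)
    (hil : ∀ l, 1 ≤ i l) (hiu : ∀ l, i l ≤ n - 2)
    (hsum : n + 1 ≤ ∑ l, i l)
    (x : Fin k → HN) (hx : ∀ l, x l ∈ 𝒩 (i l)) :
    (List.ofFn x).prod = 0 := by
  -- lift each x l to W
  have hlift : ∀ l, ∃ w ∈ 𝒲 (i l), b w = x l := by
    intro l
    have hsub : Subsingleton (Hrel (i l + 1)) := by
      have : Subsingleton (Hlow (2 * n - i l - 1)) := by
        apply hHlow
        have : i l ≤ n - 2 := hiu l
        omega
      exact (duality (i l)).toEquiv.subsingleton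
    exact hexact (i l) ⟨x l, hx l⟩ (Subsingleton.elim _ _)
  choose w hw hbw using hlift
  have hprod : (List.ofFn w).prod ∈ 𝒲 ((List.ofFn i).sum) :=
    SetLike.list_prod_ofFn_mem_graded (A := 𝒲) i w hw
  have hsum' : (List.ofFn i).sum = ∑ l, i l := by
    rw [List.sum_ofFn]
  rw [hsum', hcohW _ hsum, Submodule.mem_bot] at hprod
  have : (List.ofFn x).prod = b ((List.ofFn w).prod) := by
    rw [map_list_prod, List.map_ofFn]
    exact congrArg (List.prod ∘ List.ofFn) (funext fun l => (hbw l).symm)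
  rw [this, hprod, map_zero]
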